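/- (Maharam's recurrence theorem) Let T be a measure preserving transformation of a σ-finite measure space (X, F, m). If there exists a measurable set A with m(A) < ∞ such that X = ∪_{k≥1} T⁻ᵏ A mod m (i.e. τ_A < ∞ a.e. on X), then T is conservative. -/

import Mathlib

open MeasureTheory Set

/-- Maharam's recurrence theorem: if `T` preserves the σ-finite measure `m` and there is a
measurable set `A` of finite measure such that `τ_A < ∞` a.e. on `X`
(i.e. `X = ⋃_{k ≥ 1} T⁻ᵏ A` mod `m`), then `T` is conservative. -/
theorem stmt8 {X : Type*} [MeasurableSpace X] (m : Measure X) [SigmaFinite m] (T : X → X)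
    (hT : MeasurePreserving T m m) (A : Set X) (hA : MeasurableSet A) (hAfin : m A < ⊤)
    (hcover : m {x | ∀ n, 1 ≤ n → T^[n] x ∉ A} = 0) :
    Conservative T m := by
  have hTm : Measurable T := hT.measurable
  refine ⟨hT.quasiMeasurePreserving, fun s hs hs0 => ?_⟩
  by_contra hcon
  push_neg at hcon
  -- s is wandering: the preimages (T^[k])⁻¹ s are pairwise disjoint
  have hwand : ∀ i j : ℕ, i < j → Disjoint (T^[i] ⁻¹' s) (T^[j] ⁻¹' s) := by
    intro i j hij
    rw [Set.disjoint_left]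
    rintro x hxi hxj
    have hji : T^[(j - i)] (T^[i] x) ∈ s := by
      rwa [← Function.iterate_add_apply, Nat.sub_add_cancel hij.le]
    exact hcon (T^[i] x) hxi (j - i) (Nat.sub_ne_zero_of_lt hij) hji
  -- the bad set B and its orbit C
  set B : Set X := {x | ∀ n, 1 ≤ n → T^[n] x ∉ A} with hB
  have hBmeas : MeasurableSet B := by
    have : B = ⋂ n : ℕ, {x | 1 ≤ n → T^[n] x ∉ A} := by
      ext x; simp [hB, Set.mem_iInter]
    rw [this]
    refine MeasurableSet.iInter fun n => ?_
    rcases Nat.lt_or_ge n 1 with h | h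
    · have : {x | 1 ≤ n → T^[n] x ∉ A} = Set.univ := by
        ext x; simp [Nat.lt_one_iff.mp h]
      simp [this]
    · have : {x | 1 ≤ n → T^[n] x ∉ A} = T^[n] ⁻¹' Aᶜ := by
        ext x; simp [h]
      rw [this]
      exact (hTm.iterate n) hA.compl
  set C : Set X := ⋃ N : ℕ, T^[N] ⁻¹' B with hC
  have hCnull : m C = 0 := by
    refine measure_iUnion_null fun N => ?_
    rw [(hT.iterate N).measure_preimage hBmeas.nullMeasurableSet]
    exact hcover
  -- a.e. point hits A infinitely often
  have hinf : ∀ x ∉ C, {j : ℕ | T^[j + 1] x ∈ A}.Infinite := by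
    intro x hx
    by_contra hfin
    rw [Set.not_infinite] at hfin
    apply hx
    rcases Set.Finite.bddAbove hfin with ⟨M, hM⟩
    refine Set.mem_iUnion.mpr ⟨M + 1, ?_⟩
    intro n hn hmem
    have hmem' : (n + M) ∈ {j : ℕ | T^[j + 1] x ∈ A} := by
      show T^[n + M + 1] x ∈ A
      rw [Function.iterate_add_apply, Function.iterate_add_apply]
      exact hmem
    have := hM hmem'
    omega
  -- the partial sums bound
  set b : ℕ → ENNReal := fun j => m (s ∩ T^[j + 1] ⁻¹' A) with hb
  have hkey : ∀ n : ℕ, ∑ j ∈ Finset.range n, b j ≤ m A := by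
    intro n
    have heq : ∀ j ∈ Finset.range n, b j = m (T^[n - 1 - j] ⁻¹' s ∩ T^[n] ⁻¹' A) := by
      intro j hj
      rw [Finset.mem_range] at hj
      have hadd : (j + 1) + (n - 1 - j) = n := by omega
      have h1 : T^[n - 1 - j] ⁻¹' (s ∩ T^[j + 1] ⁻¹' A)
          = T^[n - 1 - j] ⁻¹' s ∩ T^[n] ⁻¹' A := by
        ext y
        simp only [Set.preimage_inter, Set.mem_inter_iff, Set.mem_preimage]
        constructor
        · rintro ⟨h1, h2⟩
          exact ⟨h1, by rwa [← Function.iterate_add_apply, hadd] at h2⟩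
        · rintro ⟨h1, h2⟩
          exact ⟨h1, by rwa [← Function.iterate_add_apply, hadd]⟩
      show m (s ∩ T^[j + 1] ⁻¹' A) = _
      rw [← (hT.iterate (n - 1 - j)).measure_preimage
        ((hs.inter ((hTm.iterate (j + 1)) hA)).nullMeasurableSet), h1]
    rw [Finset.sum_congr rfl heq]
    calc ∑ j ∈ Finset.range n, m (T^[n - 1 - j] ⁻¹' s ∩ T^[n] ⁻¹' A)
        = m (⋃ j ∈ Finset.range n, T^[n - 1 - j] ⁻¹' s ∩ T^[n] ⁻¹' A) := by
          rw [measure_biUnion_finset ?_ fun j _ =>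
            ((hTm.iterate _) hs).inter ((hTm.iterate n) hA)]
          intro i hi j hj hij
          rw [Finset.mem_coe, Finset.mem_range] at hi hj
          have hne : n - 1 - i ≠ n - 1 - j := by omega
          rcases hne.lt_or_gt with h | h
          · exact ((hwand _ _ h).mono Set.inter_subset_left Set.inter_subset_left)
          · exact ((hwand _ _ h).symm.mono Set.inter_subset_left Set.inter_subset_left)
      _ ≤ m (T^[n] ⁻¹' A) := by
          refine measure_mono ?_
          simp only [Set.iUnion_subset_iff]
          exact fun j _ => Set.inter_subset_right
      _ = m A := (hT.iterate n).measure_preimage hA.nullMeasurableSet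
  have htsum_le : ∑' j, b j ≤ m A := ENNReal.tsum_le_of_sum_range_le hkey
  -- but the tsum is infinite
  have htsum_eq : ∑' j, b j = ∫⁻ x in s, ∑' j : ℕ, (A.indicator (1 : X → ENNReal)) (T^[j + 1] x) ∂m := by
    rw [lintegral_tsum]
    · congr 1
      ext j
      have : (fun x => (A.indicator (1 : X → ENNReal)) (T^[j + 1] x))
          = (T^[j + 1] ⁻¹' A).indicator (1 : X → ENNReal) := by
        ext x
        by_cases hx : T^[j + 1] x ∈ A
        · rw [Set.indicator_of_mem hx, Set.indicator_of_mem (Set.mem_preimage.mpr hx)]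
          rfl
        · rw [Set.indicator_of_notMem hx,
            Set.indicator_of_notMem (fun h => hx (Set.mem_preimage.mp h))]
      rw [this, lintegral_indicator ((hTm.iterate (j + 1)) hA), Measure.restrict_restrict ((hTm.iterate (j + 1)) hA), hb]
      simp [Set.inter_comm]
    · intro j
      exact ((measurable_one.indicator hA).comp (hTm.iterate (j + 1))).aemeasurable
  have hg_top : ∀ x ∉ C, (∑' j : ℕ, (A.indicator (1 : X → ENNReal)) (T^[j + 1] x)) = ⊤ := by
    intro x hx
    have hS := hinf x hx
    have e1 : ∑' j : {j : ℕ | T^[j + 1] x ∈ A},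
        (A.indicator (1 : X → ENNReal)) (T^[(j : ℕ) + 1] x) = ⊤ := by
      have hone : ∀ j : {j : ℕ | T^[j + 1] x ∈ A},
          (A.indicator (1 : X → ENNReal)) (T^[(j : ℕ) + 1] x) = 1 := by
        rintro ⟨j, hj⟩
        have hj' : T^[j + 1] x ∈ A := hj
        rw [Set.indicator_of_mem hj']
        rfl
      rw [tsum_congr hone]
      have : Infinite {j : ℕ | T^[j + 1] x ∈ A} := hS.to_subtype
      exact ENNReal.tsum_const_eq_top_of_ne_zero one_ne_zero
    refine top_le_iff.mp ?_
    rw [← e1, tsum_subtype {j : ℕ | T^[j + 1] x ∈ A}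
      (fun j => (A.indicator (1 : X → ENNReal)) (T^[j + 1] x))]
    exact ENNReal.tsum_le_tsum fun j => Set.indicator_le_self' (fun _ _ => zero_le) j
  have htop : ∫⁻ x in s, ∑' j : ℕ, (A.indicator (1 : X → ENNReal)) (T^[j + 1] x) ∂m = ⊤ := by
    have : ∀ᵐ x ∂(m.restrict s), (∑' j : ℕ, (A.indicator (1 : X → ENNReal)) (T^[j + 1] x)) = ⊤ := by
      refine ae_restrict_of_ae ?_
      filter_upwards [measure_eq_zero_iff_ae_notMem.mp hCnull] with x hx
      exact hg_top x hx
    rw [lintegral_congr_ae this]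
    simp [lintegral_const, hs0]
  rw [htsum_eq, htop] at htsum_le
  exact absurd (lt_of_le_of_lt htsum_le hAfin) (by simp)
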